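/- arXiv:1108.2076 — 2 statements merged into one kernel-verified Lean document; each statement's English description precedes it below -/
import Mathlib

section
/- For every ζ ∈ ℂ and w ∈ ℂ∖{0}: G(ζ,w) = 0 if and only if there exists ζ' ∈ ℂ with exp ζ' = exp ζ and w = exp(iζ'). In other words, the zero locus of Stein's function F⁺ on (ℂ*)², parametrized by z = e^ζ, coincides with the image of the curve Φ(ζ) = (e^ζ, e^{iζ}), i.e. with the divisor D⁺. -/
open Complex Filter



lemma tprod_eq_zero_of_eq_zero {f : ℕ → ℂ} {i : ℕ} (h : f i = 0) : ∏' n, f n = 0 := by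
  have hp : HasProd f 0 := by
    rw [HasProd]
    apply Tendsto.congr' _ tendsto_const_nhds
    filter_upwards [eventually_ge_atTop ({i} : Finset ℕ)] with s hs
    exact (Finset.prod_eq_zero (hs (Finset.mem_singleton_self i)) h).symm
  exact hp.tprod_eq

lemma summable_log_one_add {g : ℕ → ℂ} (hg : Summable fun n => ‖g n‖) :
    Summable fun n => Complex.log (1 + g n) := by
  apply Summable.of_norm_bounded_eventually_nat (hg.mul_left (3/2))
  have h0 : Tendsto (fun n => ‖g n‖) atTop (nhds 0) := hg.tendsto_atTop_zero
  filter_upwards [h0.eventually (gt_mem_nhds (by norm_num : (0:ℝ) < 1/2))] with n hn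
  exact Complex.norm_log_one_add_half_le_self (le_of_lt hn)

lemma tprod_one_add_ne_zero {g : ℕ → ℂ} (hg : Summable fun n => ‖g n‖)
    (hne : ∀ n : ℕ, 1 + g n ≠ 0) : (∏' n : ℕ, (1 + g n)) ≠ 0 := by
  have hsum : Summable fun n : ℕ => Complex.log (1 + g n) := summable_log_one_add hg
  have h := Complex.cexp_tsum_eq_tprod (f := fun n => 1 + g n) hne hsum
  rw [← h]
  exact Complex.exp_ne_zero _

lemma summable_norm_geom (c e : ℂ) (he : ‖e‖ < 1) :
    Summable fun n : ℕ => ‖c * e ^ n‖ := by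
  simp only [norm_mul, norm_pow]
  exact (summable_geometric_of_lt_one (norm_nonneg e) he).mul_left _

lemma norm_exp_two_pi_lt : ‖Complex.exp (-(2 * Real.pi))‖ < 1 := by
  rw [Complex.norm_exp]
  simp only [neg_re, re_ofReal_mul]
  rw [Real.exp_lt_one_iff]
  have : (2 * (Real.pi:ℂ)).re = 2 * Real.pi := by simp
  rw [this]
  linarith [Real.pi_pos]


lemma tprod_eq_zero_of_eq_zero' {f : ℕ → ℂ} {i : ℕ} (h : f i = 0) : ∏' n, f n = 0 := by
  have hp : HasProd f 0 := by
    rw [HasProd]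
    apply Tendsto.congr' _ tendsto_const_nhds
    filter_upwards [eventually_ge_atTop ({i} : Finset ℕ)] with s hs
    exact (Finset.prod_eq_zero (hs (Finset.mem_singleton_self i)) h).symm
  exact hp.tprod_eq

lemma key_zero_iff (u A : ℂ) : (1 - u * Complex.exp A = 0) ↔ u = Complex.exp (-A) := by
  rw [sub_eq_zero, eq_comm]
  constructor
  · intro h
    have h2 : u * (Complex.exp A * Complex.exp (-A)) = Complex.exp (-A) := by
      rw [← mul_assoc, h, one_mul]
    rwa [← Complex.exp_add, show A + -A = 0 by ring, Complex.exp_zero, mul_one] at h2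
  · rintro rfl
    rw [← Complex.exp_add, show -A + A = 0 by ring, Complex.exp_zero]

/-- Stein's function `F⁺(z,w)` written in the variable `ξ = log z`. -/
noncomputable def steinG (ξ w : ℂ) : ℂ :=
  Complex.exp (ξ ^ 2 / (4 * Real.pi) + ξ / (1 - Complex.I)) *
    (∏' ν : ℕ, (1 - w * Complex.exp (-Complex.I * ξ - 2 * Real.pi * ν))) *
    (∏' μ : ℕ, (1 - w⁻¹ * Complex.exp (Complex.I * ξ - 2 * Real.pi * (μ + 1))))

/-- The zero locus of Stein's function on `(ℂ*)²`, parametrized by `z = e^ζ`,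
is exactly the image of the curve `Φ(ζ) = (e^ζ, e^{iζ})`, i.e. the divisor `D⁺`. -/
theorem steinG_zero_iff_curve (ζ w : ℂ) (hw : w ≠ 0) :
    steinG ζ w = 0 ↔
      ∃ ζ' : ℂ, Complex.exp ζ' = Complex.exp ζ ∧ w = Complex.exp (Complex.I * ζ') := by

  have hfac1 : ∀ ν : ℕ, 1 - w * Complex.exp (-Complex.I * ζ - 2 * Real.pi * ν)
      = 1 + (-(w * Complex.exp (-Complex.I * ζ)) * Complex.exp (-(2 * Real.pi)) ^ ν) := by
    intro ν
    rw [show -Complex.I * ζ - 2 * (Real.pi:ℂ) * ν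
        = -Complex.I * ζ + ν * (-(2 * (Real.pi:ℂ))) by ring,
      Complex.exp_add, Complex.exp_nat_mul]
    ring
  have hfac2 : ∀ μ : ℕ, 1 - w⁻¹ * Complex.exp (Complex.I * ζ - 2 * Real.pi * (μ + 1))
      = 1 + (-(w⁻¹ * Complex.exp (Complex.I * ζ) * Complex.exp (-(2 * Real.pi)))
          * Complex.exp (-(2 * Real.pi)) ^ μ) := by
    intro μ
    rw [show Complex.I * ζ - 2 * (Real.pi:ℂ) * ((μ:ℂ) + 1)
        = (Complex.I * ζ + -(2 * (Real.pi:ℂ))) + μ * (-(2 * (Real.pi:ℂ))) by ring,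
      Complex.exp_add, Complex.exp_add, Complex.exp_nat_mul]
    ring
  unfold steinG
  rw [mul_assoc, mul_eq_zero, or_iff_right (Complex.exp_ne_zero _), mul_eq_zero]
  constructor
  · rintro (h1 | h2)
    · have hex : ∃ ν : ℕ, 1 - w * Complex.exp (-Complex.I * ζ - 2 * Real.pi * ν) = 0 := by
        by_contra hc
        push_neg at hc
        exact tprod_one_add_ne_zero (summable_norm_geom _ _ norm_exp_two_pi_lt)
          (fun ν => hfac1 ν ▸ hc ν) ((tprod_congr fun ν => (hfac1 ν).symm).trans h1)
      obtain ⟨ν, hν⟩ := hex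
      refine ⟨ζ - ν * (2 * Real.pi) * Complex.I, ?_, ?_⟩
      · rw [show ζ - (ν:ℂ) * (2 * Real.pi) * Complex.I
            = ζ + ((-(ν:ℤ) : ℤ) : ℂ) * (2 * Real.pi * Complex.I) by push_cast; ring,
          Complex.exp_add, Complex.exp_int_mul_two_pi_mul_I, mul_one]
      · rw [(key_zero_iff _ _).mp hν]
        congr 1
        ring_nf
        rw [Complex.I_sq]
        ring
    · have hex : ∃ μ : ℕ, 1 - w⁻¹ * Complex.exp (Complex.I * ζ - 2 * Real.pi * (μ + 1)) = 0 := by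
        by_contra hc
        push_neg at hc
        exact tprod_one_add_ne_zero (summable_norm_geom _ _ norm_exp_two_pi_lt)
          (fun μ => hfac2 μ ▸ hc μ) ((tprod_congr fun μ => (hfac2 μ).symm).trans h2)
      obtain ⟨μ, hμ⟩ := hex
      refine ⟨ζ + ((μ:ℂ) + 1) * (2 * Real.pi) * Complex.I, ?_, ?_⟩
      · rw [show ζ + ((μ:ℂ) + 1) * (2 * Real.pi) * Complex.I
            = ζ + (((μ:ℤ) + 1 : ℤ) : ℂ) * (2 * Real.pi * Complex.I) by push_cast; ring,
          Complex.exp_add, Complex.exp_int_mul_two_pi_mul_I, mul_one]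
      · have hwinv : w⁻¹ = Complex.exp (-(Complex.I * ζ - 2 * Real.pi * ((μ:ℂ) + 1))) :=
          (key_zero_iff _ _).mp hμ
        rw [← inv_inv w, hwinv, ← Complex.exp_neg, neg_neg]
        congr 1
        ring_nf
        rw [Complex.I_sq]
        ring
  · rintro ⟨ζ', hz, rfl⟩
    obtain ⟨k, rfl⟩ := Complex.exp_eq_exp_iff_exists_int.mp hz
    rcases le_or_gt k 0 with hk | hk
    · left
      apply tprod_eq_zero_of_eq_zero' (i := (-k).toNat)
      have hcast : (((-k).toNat : ℕ) : ℂ) = -(k : ℂ) := by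
        have := Int.toNat_of_nonneg (neg_nonneg.mpr hk)
        exact_mod_cast congrArg (fun n : ℤ => (n : ℂ)) this
      rw [hcast, ← Complex.exp_add,
        show Complex.I * (ζ + (k:ℂ) * (2 * Real.pi * Complex.I))
            + (-Complex.I * ζ - 2 * Real.pi * (-(k:ℂ)))
          = (k:ℂ) * (2 * Real.pi) * (Complex.I * Complex.I + 1) by ring,
        Complex.I_mul_I, show (-1 : ℂ) + 1 = 0 by ring, mul_zero, Complex.exp_zero, sub_self]
    · right
      apply tprod_eq_zero_of_eq_zero' (i := (k - 1).toNat)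
      have hcast : (((k - 1).toNat : ℕ) : ℂ) = (k : ℂ) - 1 := by
        have := Int.toNat_of_nonneg (by omega : (0:ℤ) ≤ k - 1)
        exact_mod_cast congrArg (fun n : ℤ => (n : ℂ)) this
      rw [hcast, show (k:ℂ) - 1 + 1 = (k:ℂ) by ring, ← Complex.exp_neg,
        show Complex.I * (ζ + (k:ℂ) * (2 * Real.pi * Complex.I)) = Complex.I * ζ
            + (k:ℂ) * (2 * Real.pi) * (Complex.I * Complex.I) by ring,
        Complex.I_mul_I]
      rw [← Complex.exp_add,
        show -(Complex.I * ζ + (k:ℂ) * (2 * Real.pi) * -1)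
            + (Complex.I * ζ - 2 * Real.pi * (k:ℂ)) = 0 by ring,
        Complex.exp_zero, sub_self]
end

section
/- Stein's function satisfies the monodromy relation 𝓛_z F⁺ = w·F⁺: for every ξ ∈ ℂ and every w ∈ ℂ∖{0}, G(ξ + 2πi, w) = w · G(ξ, w). -/
open Complex

/-- If a factor vanishes, the product trivially converges to `0`. -/
lemma hasProd_zero_of_exists_eq_zero' {f : ℕ → ℂ} (n0 : ℕ) (h : f n0 = 0) :
    HasProd f 0 := by
  have hev : ∀ᶠ s : Finset ℕ in Filter.atTop, ∏ i ∈ s, f i = 0 := by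
    filter_upwards [Filter.eventually_ge_atTop ({n0} : Finset ℕ)] with s hs
    exact Finset.prod_eq_zero (hs (Finset.mem_singleton_self n0)) h
  exact (tendsto_const_nhds.congr' (hev.mono fun s hs => hs.symm) : _)

lemma multipliable_one_sub_geom (c r : ℂ) (hr : ‖r‖ < 1) :
    Multipliable (fun n : ℕ => 1 - c * r ^ n) := by
  by_cases hz : ∃ n, (1 : ℂ) - c * r ^ n = 0
  · obtain ⟨n0, hn0⟩ := hz
    exact ⟨0, hasProd_zero_of_exists_eq_zero' n0 hn0⟩
  · push_neg at hz
    have hsum : Summable fun n : ℕ => Complex.log (1 - c * r ^ n) := by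
      apply Summable.of_norm_bounded_eventually_nat
        (g := fun n => 3 / 2 * (‖c‖ * ‖r‖ ^ n))
      · exact ((summable_geometric_of_lt_one (norm_nonneg r) hr).mul_left _).mul_left _
      · have htend : Filter.Tendsto (fun n : ℕ => ‖c‖ * ‖r‖ ^ n) Filter.atTop (nhds 0) := by
          simpa using (tendsto_pow_atTop_nhds_zero_of_norm_lt_one
            (by simpa using hr)).const_mul ‖c‖
        have := htend.eventually (eventually_le_nhds (by norm_num : (0:ℝ) < 1/2))
        filter_upwards [this] with n hn
        have hnorm : ‖-(c * r ^ n)‖ ≤ 1 / 2 := by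
          simpa [norm_mul, norm_pow] using hn
        calc ‖Complex.log (1 - c * r ^ n)‖
            = ‖Complex.log (1 + -(c * r ^ n))‖ := by rw [sub_eq_add_neg]
          _ ≤ 3 / 2 * ‖-(c * r ^ n)‖ := Complex.norm_log_one_add_half_le_self hnorm
          _ = 3 / 2 * (‖c‖ * ‖r‖ ^ n) := by simp [norm_mul, norm_pow]
    exact Complex.multipliable_of_summable_log hsum

lemma norm_exp_neg_two_pi_lt_one : ‖Complex.exp (-(2 * (Real.pi : ℂ)))‖ < 1 := by
  rw [Complex.norm_exp, Real.exp_lt_one_iff]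
  have := Real.pi_pos
  simp only [neg_re, mul_re, re_ofNat, ofReal_re, im_ofNat, ofReal_im, mul_zero, sub_zero]
  linarith

/-- Canonical geometric form of `steinG`. -/
lemma steinG_eq (ξ w : ℂ) :
    steinG ξ w = Complex.exp (ξ ^ 2 / (4 * Real.pi) + ξ / (1 - Complex.I)) *
      (∏' ν : ℕ, (1 - (w * Complex.exp (-Complex.I * ξ)) *
        (Complex.exp (-(2 * (Real.pi : ℂ)))) ^ ν)) *
      (∏' μ : ℕ, (1 - (w⁻¹ * Complex.exp (Complex.I * ξ - 2 * Real.pi)) *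
        (Complex.exp (-(2 * (Real.pi : ℂ)))) ^ μ)) := by
  have h1 : ∀ ν : ℕ, (1 - w * Complex.exp (-Complex.I * ξ - 2 * Real.pi * ν))
      = (1 - (w * Complex.exp (-Complex.I * ξ)) * (Complex.exp (-(2 * (Real.pi : ℂ)))) ^ ν) := by
    intro ν
    rw [show -Complex.I * ξ - 2 * (Real.pi : ℂ) * ν
        = -Complex.I * ξ + ν * (-(2 * (Real.pi : ℂ))) by push_cast; ring,
      Complex.exp_add, Complex.exp_nat_mul]
    ring
  have h2 : ∀ μ : ℕ, (1 - w⁻¹ * Complex.exp (Complex.I * ξ - 2 * Real.pi * (μ + 1)))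
      = (1 - (w⁻¹ * Complex.exp (Complex.I * ξ - 2 * Real.pi)) *
        (Complex.exp (-(2 * (Real.pi : ℂ)))) ^ μ) := by
    intro μ
    rw [show Complex.I * ξ - 2 * (Real.pi : ℂ) * ((μ : ℂ) + 1)
        = (Complex.I * ξ - 2 * (Real.pi : ℂ)) + μ * (-(2 * (Real.pi : ℂ))) by push_cast; ring,
      Complex.exp_add, Complex.exp_nat_mul]
    ring
  unfold steinG
  rw [tprod_congr h1, tprod_congr h2]

/-- Monodromy relation `𝓛_z F⁺ = w·F⁺`: replacing `ξ = log z` by `ξ + 2πi`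
multiplies Stein's function by `w`. -/
theorem steinG_monodromy (ξ w : ℂ) (hw : w ≠ 0) :
    steinG (ξ + 2 * Real.pi * Complex.I) w = w * steinG ξ w := by
  classical
  rw [steinG_eq, steinG_eq]
  set r : ℂ := Complex.exp (-(2 * (Real.pi : ℂ))) with hr_def
  have hrne : r ≠ 0 := Complex.exp_ne_zero _
  have hr : ‖r‖ < 1 := norm_exp_neg_two_pi_lt_one
  set c₁ : ℂ := w * Complex.exp (-Complex.I * ξ) with hc₁
  set c₂ : ℂ := w⁻¹ * Complex.exp (Complex.I * ξ - 2 * Real.pi) with hc₂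
  have hc₁' : w * Complex.exp (-Complex.I * (ξ + 2 * Real.pi * Complex.I)) = c₁ / r := by
    rw [show -Complex.I * (ξ + 2 * (Real.pi : ℂ) * Complex.I)
        = -Complex.I * ξ - (-(2 * (Real.pi : ℂ))) by
      linear_combination (-2 * (Real.pi : ℂ)) * Complex.I_sq,
      Complex.exp_sub, hc₁, hr_def]
    ring
  have hc₂' : w⁻¹ * Complex.exp (Complex.I * (ξ + 2 * Real.pi * Complex.I) - 2 * Real.pi)
      = c₂ * r := by
    rw [show Complex.I * (ξ + 2 * (Real.pi : ℂ) * Complex.I) - 2 * (Real.pi : ℂ)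
        = (Complex.I * ξ - 2 * (Real.pi : ℂ)) + (-(2 * (Real.pi : ℂ))) by
      linear_combination (2 * (Real.pi : ℂ)) * Complex.I_sq,
      Complex.exp_add, hc₂, hr_def]
    ring
  rw [hc₁', hc₂']
  -- split off the first factor of each affected product
  have hP : (∏' ν : ℕ, (1 - c₁ / r * r ^ ν))
      = (1 - c₁ / r) * ∏' ν : ℕ, (1 - c₁ * r ^ ν) := by
    rw [tprod_eq_zero_mul' (f := fun ν => 1 - c₁ / r * r ^ ν)
      ((multipliable_one_sub_geom c₁ r hr).congr fun n => by
        field_simp; ring)]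
    simp only [pow_zero, mul_one]
    congr 1
    exact tprod_congr fun n => by field_simp; ring
  have hQ : (∏' μ : ℕ, (1 - c₂ * r ^ μ))
      = (1 - c₂) * ∏' μ : ℕ, (1 - c₂ * r * r ^ μ) := by
    rw [tprod_eq_zero_mul' (f := fun μ => 1 - c₂ * r ^ μ)
      ((multipliable_one_sub_geom (c₂ * r) r hr).congr fun n => by ring_nf)]
    simp only [pow_zero, mul_one]
    congr 1
    exact tprod_congr fun n => by ring
  rw [hP, hQ]
  -- the exponential prefactor
  have hexp : Complex.exp ((ξ + 2 * Real.pi * Complex.I) ^ 2 / (4 * Real.pi)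
        + (ξ + 2 * Real.pi * Complex.I) / (1 - Complex.I))
      = Complex.exp (ξ ^ 2 / (4 * Real.pi) + ξ / (1 - Complex.I)) *
        (-(Complex.exp (Complex.I * ξ) * r)) := by
    have key : (ξ + 2 * Real.pi * Complex.I) ^ 2 / (4 * Real.pi)
        + (ξ + 2 * Real.pi * Complex.I) / (1 - Complex.I)
        = (ξ ^ 2 / (4 * Real.pi) + ξ / (1 - Complex.I))
          + (Complex.I * ξ + (Real.pi : ℂ) * Complex.I + -(2 * (Real.pi : ℂ))) := by
      have hpi : (Real.pi : ℂ) ≠ 0 := by exact_mod_cast Real.pi_ne_zero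
      have h1mi : (1 : ℂ) - Complex.I ≠ 0 := by
        intro h
        have := congrArg Complex.im h
        simp at this
      field_simp
      ring_nf
      linear_combination (8 * (Real.pi : ℂ) ^ 2
        - 4 * (Real.pi : ℂ) ^ 2 * Complex.I) * Complex.I_sq
    rw [key]
    simp only [Complex.exp_add]
    rw [Complex.exp_pi_mul_I, hr_def]
    ring
  rw [hexp]
  -- the scalar identity
  have hscalar : -(Complex.exp (Complex.I * ξ) * r) * (1 - c₁ / r) = w * (1 - c₂) := by
    have he : Complex.exp (Complex.I * ξ - 2 * (Real.pi : ℂ))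
        = Complex.exp (Complex.I * ξ) * Complex.exp (-(2 * (Real.pi : ℂ))) := by
      rw [sub_eq_add_neg, Complex.exp_add]
    have h1 : Complex.exp (Complex.I * ξ) * Complex.exp (-Complex.I * ξ) = 1 := by
      rw [← Complex.exp_add, show Complex.I * ξ + -Complex.I * ξ = 0 by ring,
        Complex.exp_zero]
    rw [hc₁, hc₂, hr_def, he]
    simp only [neg_mul] at h1 ⊢
    field_simp
    linear_combination w * h1
  calc Complex.exp (ξ ^ 2 / (4 * ↑Real.pi) + ξ / (1 - Complex.I)) *
        (-(Complex.exp (Complex.I * ξ) * r)) *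
        ((1 - c₁ / r) * ∏' ν : ℕ, (1 - c₁ * r ^ ν)) * ∏' μ : ℕ, (1 - c₂ * r * r ^ μ)
      = (-(Complex.exp (Complex.I * ξ) * r) * (1 - c₁ / r)) *
        (Complex.exp (ξ ^ 2 / (4 * ↑Real.pi) + ξ / (1 - Complex.I)) *
        (∏' ν : ℕ, (1 - c₁ * r ^ ν)) * ∏' μ : ℕ, (1 - c₂ * r * r ^ μ)) := by ring
    _ = _ := by rw [hscalar]; ring
end
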